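/- Let d ≥ 2 be an integer and α ∈ (0,d). For every nonnegative locally integrable function ω on ℝ^d, every R > 0 and every s ∈ (0,1), one has ∫_{ℝ^d} ψ_R(x) ω(x) dx ≥ s^{1+α/2} ∫_{{|x| ≤ R√(1−s)}} ω(x) dx. Consequently, with H_d = ((α+2)/(d+2))^{1+α/2}((d−α)/(d+2))^{(d−α)/2}, one has sup_{R>0} R^{α−d} ∫_{ℝ^d} ψ_R(x)ω(x) dx ≥ H_d · sup_{ρ>0} ρ^{α−d} ∫_{{|x| ≤ ρ}} ω(x) dx. -/

import Mathlib

open MeasureTheory Real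

/-- The bump function `ψ(x) = (1-|x|²)₊^{1+α/2}`. -/
noncomputable def bumpPsi (d : ℕ) (α : ℝ) (x : EuclideanSpace ℝ (Fin d)) : ℝ :=
  (max (1 - ‖x‖ ^ 2) 0) ^ (1 + α / 2)

lemma bumpPsi_nonneg (d : ℕ) (α : ℝ) (x : EuclideanSpace ℝ (Fin d)) : 0 ≤ bumpPsi d α x :=
  Real.rpow_nonneg (le_max_right _ _) _

lemma bumpPsi_continuous (d : ℕ) (α : ℝ) (hα : 0 < α) : Continuous (bumpPsi d α) := by
  apply Continuous.rpow_const
  · exact (continuous_const.sub ((continuous_norm).pow 2)).max continuous_const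
  · intro x; right; positivity

lemma part1 (d : ℕ) (α : ℝ) (hα0 : 0 < α)
    (ω : EuclideanSpace ℝ (Fin d) → ℝ) (hω : ∀ x, 0 ≤ ω x)
    (hloc : LocallyIntegrable ω volume) (R : ℝ) (hR : 0 < R) (s : ℝ) (hs : s ∈ Set.Ioo (0:ℝ) 1) :
    s ^ (1 + α / 2) *
        (∫ x in Metric.closedBall (0 : EuclideanSpace ℝ (Fin d)) (R * Real.sqrt (1 - s)), ω x) ≤
      ∫ x : EuclideanSpace ℝ (Fin d), bumpPsi d α (R⁻¹ • x) * ω x := by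
  have hcont : Continuous (fun x : EuclideanSpace ℝ (Fin d) => bumpPsi d α (R⁻¹ • x)) :=
    (bumpPsi_continuous d α hα0).comp (continuous_const_smul _)
  have hcs : HasCompactSupport (fun x : EuclideanSpace ℝ (Fin d) => bumpPsi d α (R⁻¹ • x)) := by
    apply HasCompactSupport.intro (isCompact_closedBall (0 : EuclideanSpace ℝ (Fin d)) R)
    intro x hx
    simp only [Metric.mem_closedBall, dist_zero_right, not_le] at hx
    have h1 : (1:ℝ) < ‖R⁻¹ • x‖ := by
      rw [norm_smul, norm_inv, Real.norm_of_nonneg hR.le]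
      rw [lt_inv_mul_iff₀ hR, mul_one]
      exact hx
    have : max (1 - ‖R⁻¹ • x‖ ^ 2) 0 = 0 := by
      apply max_eq_right
      nlinarith
    rw [bumpPsi, this, Real.zero_rpow]
    positivity
  have hint : Integrable (fun x => bumpPsi d α (R⁻¹ • x) * ω x) volume := by
    simpa [smul_eq_mul] using hloc.integrable_smul_left_of_hasCompactSupport hcont hcs
  set B := Metric.closedBall (0 : EuclideanSpace ℝ (Fin d)) (R * Real.sqrt (1 - s))
  have hlow : ∀ x ∈ B, s ^ (1 + α / 2) ≤ bumpPsi d α (R⁻¹ • x) := by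
    intro x hx
    simp only [B, Metric.mem_closedBall, dist_zero_right] at hx
    have hn : ‖R⁻¹ • x‖ ≤ Real.sqrt (1 - s) := by
      rw [norm_smul, norm_inv, Real.norm_of_nonneg hR.le]
      rw [inv_mul_le_iff₀ hR]
      linarith [hx]
    have hsq : ‖R⁻¹ • x‖ ^ 2 ≤ 1 - s := by
      have := Real.sq_sqrt (by linarith [hs.2] : (0:ℝ) ≤ 1 - s)
      nlinarith [norm_nonneg (R⁻¹ • x)]
    have : s ≤ max (1 - ‖R⁻¹ • x‖ ^ 2) 0 := le_max_of_le_left (by linarith)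
    exact Real.rpow_le_rpow hs.1.le this (by positivity)
  calc s ^ (1 + α / 2) * ∫ x in B, ω x = ∫ x in B, s ^ (1 + α / 2) * ω x := by
        rw [← integral_const_mul]
    _ ≤ ∫ x in B, bumpPsi d α (R⁻¹ • x) * ω x := by
        apply setIntegral_mono_on
        · exact (hloc.integrableOn_isCompact (isCompact_closedBall _ _)).const_mul _
        · exact hint.integrableOn
        · exact measurableSet_closedBall
        · intro x hx
          exact mul_le_mul_of_nonneg_right (hlow x hx) (hω x)
    _ ≤ ∫ x, bumpPsi d α (R⁻¹ • x) * ω x := by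
        apply setIntegral_le_integral hint
        filter_upwards with x
        exact mul_nonneg (bumpPsi_nonneg _ _ _) (hω x)

/-- Comparison of truncated moments `∫ ψ_R ω` with the radial concentration. -/
theorem moments_vs_concentration (d : ℕ) (hd : 2 ≤ d) (α : ℝ) (hα : α ∈ Set.Ioo (0:ℝ) (d:ℝ))
    (ω : EuclideanSpace ℝ (Fin d) → ℝ) (hω : ∀ x, 0 ≤ ω x)
    (hloc : LocallyIntegrable ω volume) :
    (∀ R : ℝ, 0 < R → ∀ s ∈ Set.Ioo (0:ℝ) 1,
      s ^ (1 + α / 2) *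
          (∫ x in Metric.closedBall (0 : EuclideanSpace ℝ (Fin d)) (R * Real.sqrt (1 - s)), ω x) ≤
        ∫ x : EuclideanSpace ℝ (Fin d), bumpPsi d α (R⁻¹ • x) * ω x) ∧
    ENNReal.ofReal
        (((α + 2) / ((d : ℝ) + 2)) ^ (1 + α / 2) * (((d : ℝ) - α) / (d + 2)) ^ (((d : ℝ) - α) / 2)) *
        (⨆ (ρ : ℝ) (_ : 0 < ρ),
          ENNReal.ofReal (ρ ^ (α - d) *
            ∫ x in Metric.closedBall (0 : EuclideanSpace ℝ (Fin d)) ρ, ω x)) ≤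
      ⨆ (R : ℝ) (_ : 0 < R),
        ENNReal.ofReal (R ^ (α - d) * ∫ x : EuclideanSpace ℝ (Fin d), bumpPsi d α (R⁻¹ • x) * ω x) := by
  obtain ⟨hα0, hαd⟩ := hα
  refine ⟨fun R hR s hs => part1 d α hα0 ω hω hloc R hR s hs, ?_⟩
  set s : ℝ := (α + 2) / ((d : ℝ) + 2) with hs_def
  have hd2 : (0:ℝ) < (d:ℝ) + 2 := by positivity
  have hs : s ∈ Set.Ioo (0:ℝ) 1 := by
    constructor
    · apply div_pos (by linarith) hd2
    · rw [div_lt_one hd2]; linarith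
  have h1s : 1 - s = ((d : ℝ) - α) / ((d : ℝ) + 2) := by
    rw [hs_def]; field_simp; ring
  have h1s_pos : (0:ℝ) < 1 - s := by linarith [hs.2]
  set H : ℝ := s ^ (1 + α / 2) * (1 - s) ^ (((d : ℝ) - α) / 2) with hH_def
  have hHpos : 0 < H := by
    apply mul_pos (Real.rpow_pos_of_pos hs.1 _) (Real.rpow_pos_of_pos h1s_pos _)
  have hHeq : ((α + 2) / ((d : ℝ) + 2)) ^ (1 + α / 2) *
      (((d : ℝ) - α) / (d + 2)) ^ (((d : ℝ) - α) / 2) = H := by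
    rw [hH_def, h1s]
  rw [hHeq, ENNReal.mul_iSup]
  refine iSup_le fun ρ => ?_
  rw [ENNReal.mul_iSup]
  refine iSup_le fun hρ => ?_
  set R : ℝ := ρ / Real.sqrt (1 - s) with hR_def
  have hsqrt : 0 < Real.sqrt (1 - s) := Real.sqrt_pos.2 h1s_pos
  have hR : 0 < R := div_pos hρ hsqrt
  have hball : R * Real.sqrt (1 - s) = ρ := by
    rw [hR_def, div_mul_cancel₀]
    exact hsqrt.ne'
  have hRpow : R ^ (α - d) = ρ ^ (α - d) * (1 - s) ^ (((d : ℝ) - α) / 2) := by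
    rw [hR_def, Real.div_rpow hρ.le hsqrt.le, Real.sqrt_eq_rpow,
      ← Real.rpow_mul h1s_pos.le, div_eq_mul_inv, ← Real.rpow_neg h1s_pos.le]
    congr 1
    ring
  have hkey := part1 d α hα0 ω hω hloc R hR s hs
  rw [hball] at hkey
  have hI : 0 ≤ ∫ x in Metric.closedBall (0 : EuclideanSpace ℝ (Fin d)) ρ, ω x :=
    integral_nonneg fun x => hω x
  have hreal : H * (ρ ^ (α - d) * ∫ x in Metric.closedBall (0 : EuclideanSpace ℝ (Fin d)) ρ, ω x) ≤
      R ^ (α - d) * ∫ x : EuclideanSpace ℝ (Fin d), bumpPsi d α (R⁻¹ • x) * ω x := by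
    have h1 : H * (ρ ^ (α - d) * ∫ x in Metric.closedBall (0 : EuclideanSpace ℝ (Fin d)) ρ, ω x)
        = R ^ (α - d) * (s ^ (1 + α / 2) *
            ∫ x in Metric.closedBall (0 : EuclideanSpace ℝ (Fin d)) ρ, ω x) := by
      rw [hRpow, hH_def]; ring
    rw [h1]
    exact mul_le_mul_of_nonneg_left hkey (Real.rpow_nonneg hR.le _)
  calc ENNReal.ofReal H *
        ENNReal.ofReal (ρ ^ (α - d) * ∫ x in Metric.closedBall (0 : EuclideanSpace ℝ (Fin d)) ρ, ω x)
      = ENNReal.ofReal (H * (ρ ^ (α - d) *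
          ∫ x in Metric.closedBall (0 : EuclideanSpace ℝ (Fin d)) ρ, ω x)) := by
        rw [ENNReal.ofReal_mul hHpos.le]
    _ ≤ ENNReal.ofReal (R ^ (α - d) *
          ∫ x : EuclideanSpace ℝ (Fin d), bumpPsi d α (R⁻¹ • x) * ω x) :=
        ENNReal.ofReal_le_ofReal hreal
    _ ≤ _ := le_iSup₂_of_le R hR le_rfl
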